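/- arXiv:2510.19104 — 2 statements merged into one kernel-verified Lean document; each statement's English description precedes it below -/
import Mathlib

section
/- For fixed m ≥ 0 and 0 ≤ k ≤ m, the prism cell S_k = { (u,t) ∈ |Δ^m| × [0,1] : Σ_{i>k} u_i ≤ t ≤ u_k + Σ_{i>k} u_i } equals the convex hull of the points (e_0,0),…,(e_k,0),(e_k,1),…,(e_m,1), where e_i are the vertices of the geometric m-simplex. -/
open Finset

/-- The prism cell `S_k ⊆ |Δ^m| × [0,1]`. -/
def prismCell (m : ℕ) (k : Fin (m + 1)) : Set ((Fin (m + 1) → ℝ) × ℝ) :=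
  {x | x.1 ∈ stdSimplex ℝ (Fin (m + 1)) ∧
    (∑ i ∈ Finset.univ.filter (fun i => k < i), x.1 i) ≤ x.2 ∧
    x.2 ≤ x.1 k + ∑ i ∈ Finset.univ.filter (fun i => k < i), x.1 i}

lemma prismCell_convex (m : ℕ) (k : Fin (m + 1)) : Convex ℝ (prismCell m k) := by
  intro x hx y hy a b ha hb hab
  obtain ⟨hx1, hx2, hx3⟩ := hx
  obtain ⟨hy1, hy2, hy3⟩ := hy
  refine ⟨convex_stdSimplex ℝ _ hx1 hy1 ha hb hab, ?_, ?_⟩ <;>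
  · simp only [Prod.fst_add, Prod.snd_add, Prod.smul_fst, Prod.smul_snd, Pi.add_apply,
      Pi.smul_apply, smul_eq_mul, Finset.sum_add_distrib, ← Finset.mul_sum]
    nlinarith [mul_le_mul_of_nonneg_left hx2 ha, mul_le_mul_of_nonneg_left hy2 hb,
      mul_le_mul_of_nonneg_left hx3 ha, mul_le_mul_of_nonneg_left hy3 hb]

lemma sum_filter_single (m : ℕ) (k j : Fin (m + 1)) :
    (∑ i ∈ Finset.univ.filter (fun i => k < i), (Pi.single j (1:ℝ) : Fin (m+1) → ℝ) i)
      = if k < j then 1 else 0 := by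
  rw [Finset.sum_filter]
  have : ∀ i : Fin (m+1), (if k < i then (Pi.single j (1:ℝ) : Fin (m+1) → ℝ) i else 0)
      = if i = j then (if k < j then (1:ℝ) else 0) else 0 := by
    intro i
    rcases eq_or_ne i j with rfl | hij
    · simp [Pi.single_apply]
    · simp [Pi.single_apply, hij]
  rw [Finset.sum_congr rfl (fun i _ => this i)]
  simp

/-- The prism cell `S_k` equals the convex hull of the vertices
`(e_0,0), …, (e_k,0), (e_k,1), …, (e_m,1)`. -/
theorem prismCell_eq_convexHull (m : ℕ) (k : Fin (m + 1)) :
    prismCell m k =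
      convexHull ℝ
        (((fun i : Fin (m + 1) => ((Pi.single i (1 : ℝ) : Fin (m + 1) → ℝ), (0 : ℝ))) ''
            {i | i ≤ k}) ∪
          ((fun i : Fin (m + 1) => ((Pi.single i (1 : ℝ) : Fin (m + 1) → ℝ), (1 : ℝ))) ''
            {i | k ≤ i})) := by
  apply Set.Subset.antisymm
  · -- hard direction
    rintro ⟨u, t⟩ ⟨hu, hts, htub⟩
    set s : ℝ := ∑ i ∈ Finset.univ.filter (fun i => k < i), u i with hs
    set w : Fin (m+1) ⊕ Fin (m+1) → ℝ := fun p =>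
      match p with
      | Sum.inl i => if i < k then u i else if i = k then u k + s - t else 0
      | Sum.inr i => if i = k then t - s else if k < i then u i else 0 with hw
    set z : Fin (m+1) ⊕ Fin (m+1) → (Fin (m+1) → ℝ) × ℝ := fun p =>
      match p with
      | Sum.inl i => ((Pi.single (min i k) (1:ℝ) : Fin (m+1) → ℝ), (0:ℝ))
      | Sum.inr i => ((Pi.single (max i k) (1:ℝ) : Fin (m+1) → ℝ), (1:ℝ)) with hz
    have hwsum : ∀ i : Fin (m+1), w (Sum.inl i) + w (Sum.inr i) = u i := by
      intro i
      rcases lt_trichotomy i k with h | h | h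
      · simp [hw, h, h.ne, not_lt.mpr h.le]
      · subst h; simp [hw]
      · simp [hw, h, h.ne', not_lt.mpr h.le]
    apply mem_convexHull_of_exists_fintype w z
    · rintro (i | i)
      · rcases lt_trichotomy i k with h | h | h
        · simpa [hw, h] using (hu.1 i)
        · subst h; simp [hw]; linarith
        · simp [hw, h.ne', not_lt.mpr h.le]
      · rcases lt_trichotomy i k with h | h | h
        · simp [hw, h.ne, not_lt.mpr h.le]
        · subst h; simp [hw]; linarith
        · simpa [hw, h, h.ne'] using (hu.1 i)
    · rw [Fintype.sum_sum_type, ← Finset.sum_add_distrib]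
      rw [Finset.sum_congr rfl (fun i _ => hwsum i)]
      exact hu.2
    · rintro (i | i)
      · exact Or.inl ⟨min i k, min_le_right i k, rfl⟩
      · exact Or.inr ⟨max i k, le_max_right i k, rfl⟩
    · rw [Fintype.sum_sum_type]
      have hl : ∀ i : Fin (m+1), w (Sum.inl i) • z (Sum.inl i)
          = w (Sum.inl i) • ((Pi.single i (1:ℝ) : Fin (m+1) → ℝ), (0:ℝ)) := by
        intro i
        rcases le_or_gt i k with h | h
        · simp [hz, min_eq_left h]
        · simp [hw, hz, h.ne', not_lt.mpr h.le]
      have hr : ∀ i : Fin (m+1), w (Sum.inr i) • z (Sum.inr i)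
          = w (Sum.inr i) • ((Pi.single i (1:ℝ) : Fin (m+1) → ℝ), (1:ℝ)) := by
        intro i
        rcases le_or_gt k i with h | h
        · simp [hz, max_eq_left h]
        · simp [hw, hz, h.ne, not_lt.mpr h.le]
      rw [Finset.sum_congr rfl (fun i _ => hl i), Finset.sum_congr rfl (fun i _ => hr i)]
      refine Prod.ext ?_ ?_
      · simp only [Prod.fst_add, Prod.fst_sum, Prod.smul_fst]
        rw [← Finset.sum_add_distrib]
        have : ∀ i : Fin (m+1),
            w (Sum.inl i) • (Pi.single i (1:ℝ) : Fin (m+1) → ℝ)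
              + w (Sum.inr i) • (Pi.single i (1:ℝ) : Fin (m+1) → ℝ)
            = Pi.single i (u i) := by
          intro i
          rw [← add_smul, hwsum i, ← Pi.single_smul, smul_eq_mul, mul_one]
        rw [Finset.sum_congr rfl (fun i _ => this i)]
        exact Finset.univ_sum_single u
      · simp only [Prod.snd_add, Prod.snd_sum, Prod.smul_snd, smul_eq_mul, mul_zero, mul_one,
          Finset.sum_const_zero, zero_add]
        have : ∀ i : Fin (m+1), w (Sum.inr i)
            = (if i = k then t - s else 0) + (if k < i then u i else 0) := by
          intro i
          rcases eq_or_ne i k with rfl | h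
          · simp [hw]
          · simp [hw, h]
        rw [Finset.sum_congr rfl (fun i _ => this i), Finset.sum_add_distrib]
        rw [Finset.sum_ite_eq' Finset.univ k (fun _ => t - s), ← Finset.sum_filter]
        simp [← hs]
  · -- easy direction
    apply convexHull_min _ (prismCell_convex m k)
    rintro p (⟨i, hi, rfl⟩ | ⟨i, hi, rfl⟩) <;>
      refine ⟨single_mem_stdSimplex ℝ i, ?_, ?_⟩ <;>
      simp only [sum_filter_single] <;>
      simp only [Set.mem_setOf_eq] at hi
    · simp [not_lt.mpr hi]
    · simp only [not_lt.mpr hi, if_false, add_zero, Pi.single_apply]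
      positivity
    · split <;> norm_num
    · rcases eq_or_ne i k with rfl | h
      · simp
      · have hk : k < i := lt_of_le_of_ne hi (Ne.symm h)
        simp only [hk, if_true]
        have : (0:ℝ) ≤ (Pi.single i (1:ℝ) : Fin (m+1) → ℝ) k := by
          simp [Pi.single_apply]; positivity
        linarith
end

section
/- With α : [m] → [n] monotone and β the step map with index k, the realized formula for α ⊡ β agrees with the straight-line contraction composed with |α|: for u ∈ |Δ^m| and s = Σ_{i>k} u_i, the vector v with v_j = Σ_{i>k, α(i)=j} u_i (j ≥ 1), v_0 = (1−s) + Σ_{i>k, α(i)=0} u_i satisfies v = C(|α|(u'), s) where u' is the renormalization of (u_i)_{i>k} when s > 0 — equivalently, t·(|α|(u))_j differs from v_j by a term supported on indices i ≤ k; in particular if β = c₁ (k = −1, s = 1) then v = |α|(u), and if β = c₀ (k = m, s = 0) then v = e_0. -/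
open Finset

/-- The Hadamard product `i ↦ α(i)·β(i)` of `α : [m] → [n]` with `β : [m] → [1]`,
landing in `[n]` since `n·1 = n`. -/
def hadamardStep {m n : ℕ} (α : Fin (m + 1) →o Fin (n + 1)) (β : Fin (m + 1) →o Fin 2) :
    Fin (m + 1) → Fin (n + 1) := fun i =>
  ⟨(α i : ℕ) * (β i : ℕ),
    Nat.lt_succ_of_le (le_trans
      (Nat.mul_le_mul (Nat.lt_succ_iff.mp (α i).isLt) (Nat.lt_succ_iff.mp (β i).isLt))
      (le_of_eq (Nat.mul_one n)))⟩

lemma hadamard_eq_iff {m n : ℕ} (α : Fin (m + 1) →o Fin (n + 1)) (β : Fin (m + 1) →o Fin 2)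
    (i : Fin (m + 1)) (j : Fin (n + 1)) :
    hadamardStep α β i = j ↔ ((β i : ℕ) = 1 ∧ α i = j) ∨ ((β i : ℕ) = 0 ∧ j = 0) := by
  have hb : (β i : ℕ) = 0 ∨ (β i : ℕ) = 1 := by omega
  simp only [hadamardStep, Fin.ext_iff]
  rcases hb with h | h <;> simp [h]
  exact ⟨fun h' => Fin.ext (by simp [← h']), fun h' => by simp [h']⟩

/-- The realized Hadamard homotopy agrees with the straight-line contraction composed
with `|α|`: writing `v_j = Σ_{(α⊡β)(i)=j} u_i` and `|α|(u)_j = Σ_{α(i)=j} u_i`, for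
`j ≠ 0` the value `v_j` differs from `|α|(u)_j` by the term supported on the indices
where `β = 0`; in particular if `β = c₁` then `v = |α|(u)`, and if `β = c₀` then
`v = e_0`. -/
theorem realized_hadamard_is_contraction {m n : ℕ} (α : Fin (m + 1) →o Fin (n + 1))
    (β : Fin (m + 1) →o Fin 2) (u : Fin (m + 1) → ℝ)
    (hu : u ∈ stdSimplex ℝ (Fin (m + 1))) :
    (∀ j : Fin (n + 1), j ≠ 0 →
      (∑ i ∈ Finset.univ.filter (fun i => hadamardStep α β i = j), u i) =
        (∑ i ∈ Finset.univ.filter (fun i => α i = j), u i) -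
          ∑ i ∈ Finset.univ.filter (fun i => β i = 0 ∧ α i = j), u i) ∧
    ((∀ i, β i = 1) → ∀ j : Fin (n + 1),
      (∑ i ∈ Finset.univ.filter (fun i => hadamardStep α β i = j), u i) =
        ∑ i ∈ Finset.univ.filter (fun i => α i = j), u i) ∧
    ((∀ i, β i = 0) →
      (fun j => ∑ i ∈ Finset.univ.filter (fun i => hadamardStep α β i = j), u i) =
        (Pi.single 0 1 : Fin (n + 1) → ℝ)) := by
  refine ⟨?_, ?_, ?_⟩
  · intro j hj
    rw [Finset.sum_filter, Finset.sum_filter, Finset.sum_filter, ← Finset.sum_sub_distrib]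
    refine Finset.sum_congr rfl fun i _ => ?_
    have hb : (β i : ℕ) = 0 ∨ (β i : ℕ) = 1 := by omega
    have hb0 : β i = 0 ↔ (β i : ℕ) = 0 := Fin.ext_iff
    rcases hb with h | h <;>
      rcases eq_or_ne (α i) j with ha | ha <;>
      simp [hadamard_eq_iff, h, ha, hb0, hj]
  · intro hβ j
    refine Finset.sum_congr ?_ fun _ _ => rfl
    apply Finset.filter_congr
    intro i _
    have h1 : (β i : ℕ) = 1 := by rw [hβ i]; rfl
    simp [hadamard_eq_iff, h1]
  · intro hβ
    funext j
    rcases eq_or_ne j 0 with rfl | hj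
    · have : Finset.univ.filter (fun i => hadamardStep α β i = (0 : Fin (n+1))) =
          Finset.univ := by
        apply Finset.filter_true_of_mem
        intro i _
        have h0 : (β i : ℕ) = 0 := by rw [hβ i]; rfl
        simp [hadamard_eq_iff, h0]
      rw [this, hu.2]
      simp
    · have : Finset.univ.filter (fun i => hadamardStep α β i = j) = ∅ := by
        apply Finset.filter_false_of_mem
        intro i _
        have h0 : (β i : ℕ) = 0 := by rw [hβ i]; rfl
        simp [hadamard_eq_iff, h0, hj]
      rw [this]
      simp [Pi.single_eq_of_ne hj]
end
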